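/- Let (S,+,□,∂) be a monotonic arithmetical semiring (i.e. there is N such that S⁺(n) ≤ S⁺(n+1) for all n ≥ N), and let D > 2 be an integer. Then for all sufficiently large n: S⁺(n) − S□(n) − Σ_{r=2}^{D−1, r ∣ n} S□(r)·S⁺(n/r) ≤ S(⌊n/D⌋ + D) − S⁺(⌊n/D⌋ + D). -/

import Mathlib

/-- Number of elements of degree `n`. -/
noncomputable def cntAll {S : Type*} (deg : S → ℕ) (n : ℕ) : ℕ :=
  Nat.card {x : S // deg x = n}

/-- Number of elements of degree `n` lying in the set `P`. -/
noncomputable def cntIn {S : Type*} (deg : S → ℕ) (P : Set S) (n : ℕ) : ℕ :=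
  Nat.card {x : S // deg x = n ∧ x ∈ P}

section Aux
variable {S : Type*} [CommSemiring S] (Sp Sq : Set S) (deg : S → ℕ)

lemma aux_pairrep (p₁ p₂ : Sp) :
    ((Finsupp.single p₁ 1 + Finsupp.single p₂ 1).sum fun p n => n • (p : S)) =
      (p₁ : S) + p₂ := by
  have hz : ∀ p : Sp, (fun (p : Sp) (n : ℕ) => n • (p : S)) p 0 = 0 := fun p => zero_smul _ _
  have ha : ∀ (p : Sp) (m k : ℕ), (fun (p : Sp) (n : ℕ) => n • (p : S)) p (m + k) =
      (fun (p : Sp) (n : ℕ) => n • (p : S)) p m + (fun (p : Sp) (n : ℕ) => n • (p : S)) p k :=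
    fun p m k => add_smul m k _
  rw [Finsupp.sum_add_index' hz ha, Finsupp.sum_single_index (hz p₁),
    Finsupp.sum_single_index (hz p₂)]
  simp

lemma aux_zero_not_mem
    (hadd_free : ∀ x : S, ∃! f : Sp →₀ ℕ, x = f.sum fun p n => n • (p : S)) :
    (0 : S) ∉ Sp := by
  intro h0
  obtain ⟨f, _, huniq⟩ := hadd_free 0
  have h1 : (0 : Sp →₀ ℕ) = f := huniq 0 (by simp)
  have h2 : (Finsupp.single (⟨0, h0⟩ : Sp) 1) = f := by
    apply huniq
    rw [Finsupp.sum_single_index (by simp)]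
    simp
  rw [← h1] at h2
  have := DFunLike.congr_fun h2 ⟨0, h0⟩
  simp at this

lemma aux_one_not_mem
    (hone_mem : (1 : S) ∈ Sp)
    (hmul_free : ∀ x ∈ Sp, ∃! f : Sq →₀ ℕ, x = f.prod fun q n => (q : S) ^ n) :
    (1 : S) ∉ Sq := by
  intro h1
  obtain ⟨f, _, huniq⟩ := hmul_free 1 hone_mem
  have ha : (0 : Sq →₀ ℕ) = f := huniq 0 (by simp)
  have hb : (Finsupp.single (⟨1, h1⟩ : Sq) 1) = f := by
    apply huniq
    show (1 : S) = _
    rw [Finsupp.prod_single_index (h := fun (p : Sq) (n : ℕ) => (p : S) ^ n) (pow_zero _)]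
    simp
  rw [← ha] at hb
  have := DFunLike.congr_fun hb ⟨1, h1⟩
  simp at this

lemma aux_two_ne
    (hadd_free : ∀ x : S, ∃! f : Sp →₀ ℕ, x = f.sum fun p n => n • (p : S))
    (a b c : S) (ha : a ∈ Sp) (hb : b ∈ Sp) (hc : c ∈ Sp) : a + b ≠ c := by
  classical
  intro h
  obtain ⟨f, _, huniq⟩ := hadd_free c
  have h1 : (Finsupp.single (⟨c, hc⟩ : Sp) 1) = f := by
    apply huniq
    rw [Finsupp.sum_single_index (by simp)]
    simp
  have h2 : (Finsupp.single (⟨a, ha⟩ : Sp) 1 + Finsupp.single (⟨b, hb⟩ : Sp) 1) = f := by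
    apply huniq
    show c = _
    rw [aux_pairrep]
    exact h.symm
  rw [← h1] at h2
  have sval : ∀ (x y : S) (hx : x ∈ Sp) (hy : y ∈ Sp),
      ((⟨x, hx⟩ : Sp) = ⟨y, hy⟩) ↔ x = y := by
    intro x y hx hy
    exact ⟨fun hh => congrArg Subtype.val hh, fun hh => Subtype.ext hh⟩
  have e1 := DFunLike.congr_fun h2 ⟨a, ha⟩
  have e2 := DFunLike.congr_fun h2 ⟨b, hb⟩
  simp only [Finsupp.add_apply, Finsupp.single_apply, sval] at e1 e2
  simp only [if_true] at e1 e2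
  by_cases hba : b = a
  · rw [if_pos hba] at e1
    split_ifs at e1 <;> omega
  · rw [if_neg hba] at e1
    have hca : c = a := by
      by_contra hca
      rw [if_neg hca] at e1; omega
    by_cases hab : a = b
    · exact hba hab.symm
    · rw [if_neg hab] at e2
      have hcb : c = b := by
        by_contra hcb
        rw [if_neg hcb] at e2; omega
      exact hba (hcb ▸ hca ▸ rfl : b = a)

lemma aux_four
    (hadd_free : ∀ x : S, ∃! f : Sp →₀ ℕ, x = f.sum fun p n => n • (p : S))
    (a b c d : S) (ha : a ∈ Sp) (hb : b ∈ Sp) (hc : c ∈ Sp) (hd : d ∈ Sp)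
    (h : a + b = c + d)
    (hab : a ≠ b) (had : a ≠ d) (hcb : c ≠ b) (hcd : c ≠ d) :
    a = c ∧ b = d := by
  classical
  obtain ⟨f, _, huniq⟩ := hadd_free (a + b)
  have h1 : (Finsupp.single (⟨a, ha⟩ : Sp) 1 + Finsupp.single (⟨b, hb⟩ : Sp) 1) = f := by
    apply huniq; show a + b = _; rw [aux_pairrep]
  have h2 : (Finsupp.single (⟨c, hc⟩ : Sp) 1 + Finsupp.single (⟨d, hd⟩ : Sp) 1) = f := by
    apply huniq; show a + b = _; rw [aux_pairrep]; exact h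
  rw [← h2] at h1
  have sval : ∀ (x y : S) (hx : x ∈ Sp) (hy : y ∈ Sp),
      ((⟨x, hx⟩ : Sp) = ⟨y, hy⟩) ↔ x = y := by
    intro x y hx hy
    exact ⟨fun hh => congrArg Subtype.val hh, fun hh => Subtype.ext hh⟩
  have e1 := DFunLike.congr_fun h1 ⟨a, ha⟩
  have e2 := DFunLike.congr_fun h1 ⟨b, hb⟩
  simp only [Finsupp.add_apply, Finsupp.single_apply, sval] at e1 e2
  simp only [if_true] at e1 e2
  rw [if_neg (fun hh : b = a => hab hh.symm),
    if_neg (fun hh : d = a => had hh.symm)] at e1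
  have hca : c = a := by
    by_contra hca
    rw [if_neg hca] at e1; omega
  rw [if_neg hab, if_neg hcb] at e2
  have hdb : d = b := by
    by_contra hdb
    rw [if_neg hdb] at e2; omega
  exact ⟨hca.symm, hdb.symm⟩

end Aux

section Aux2
variable {S : Type*} [CommSemiring S] (Sp Sq : Set S) (deg : S → ℕ)

lemma aux_prod_mem
    (hSqSp : Sq ⊆ Sp) (hone_mem : (1 : S) ∈ Sp)
    (hmul_mem : ∀ x ∈ Sp, ∀ y ∈ Sp, x * y ∈ Sp)
    (f : Sq →₀ ℕ) : (f.prod fun q n => (q : S) ^ n) ∈ Sp := by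
  apply Finset.prod_induction _ (fun z => z ∈ Sp) (fun x y hx hy => hmul_mem x hx y hy) hone_mem
  intro q _
  induction f q with
  | zero => simpa using hone_mem
  | succ m ih =>
    show (q : S) ^ (m + 1) ∈ Sp
    rw [pow_succ]
    exact hmul_mem _ ih _ (hSqSp q.2)

lemma aux_deg_prod (hdeg_one : deg 1 = 1)
    (hdeg_mul : ∀ x y : S, deg (x * y) = deg x * deg y)
    (f : Sq →₀ ℕ) :
    deg (f.prod fun q n => (q : S) ^ n) = f.prod fun q n => (deg (q : S)) ^ n := by
  let degM : S →* ℕ := { toFun := deg, map_one' := hdeg_one, map_mul' := hdeg_mul }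
  refine (map_finsuppProd degM f _).trans (Finsupp.prod_congr fun q _ => ?_)
  exact degM.map_pow (q : S) _

/-- Multiplicative primes have degree at least 2. -/
lemma aux_deg_ge_two
    (hadd_free : ∀ x : S, ∃! f : Sp →₀ ℕ, x = f.sum fun p n => n • (p : S))
    (hSqSp : Sq ⊆ Sp) (hone_mem : (1 : S) ∈ Sp)
    (hmul_free : ∀ x ∈ Sp, ∃! f : Sq →₀ ℕ, x = f.prod fun q n => (q : S) ^ n)
    (hfiber0 : ∀ x : S, deg x = 0 ↔ x = 0)
    (hfiber1 : ∀ x ∈ Sp, (deg x = 1 ↔ x = 1))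
    (q : S) (hq : q ∈ Sq) : 2 ≤ deg q := by
  rcases Nat.lt_or_ge (deg q) 2 with h | h
  · interval_cases hdq : deg q
    · exact absurd ((hfiber0 q).mp hdq ▸ hSqSp hq)
        (aux_zero_not_mem Sp hadd_free)
    · exact absurd (((hfiber1 q (hSqSp hq)).mp hdq) ▸ hq)
        (aux_one_not_mem Sp Sq hone_mem hmul_free)
  · exact h

/-- Multiplicative decomposition: a non-prime additive prime of degree ≥ 2 factors
as `q * y` with `q` a multiplicative prime of small degree. -/
lemma aux_mdecomp
    (hdeg_one : deg 1 = 1)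
    (hdeg_mul : ∀ x y : S, deg (x * y) = deg x * deg y)
    (hadd_free : ∀ x : S, ∃! f : Sp →₀ ℕ, x = f.sum fun p n => n • (p : S))
    (hSqSp : Sq ⊆ Sp) (hone_mem : (1 : S) ∈ Sp)
    (hmul_mem : ∀ x ∈ Sp, ∀ y ∈ Sp, x * y ∈ Sp)
    (hmul_free : ∀ x ∈ Sp, ∃! f : Sq →₀ ℕ, x = f.prod fun q n => (q : S) ^ n)
    (hfiber0 : ∀ x : S, deg x = 0 ↔ x = 0)
    (hfiber1 : ∀ x ∈ Sp, (deg x = 1 ↔ x = 1))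
    (x : S) (hx : x ∈ Sp) (hdx : 2 ≤ deg x) (hxq : x ∉ Sq) :
    ∃ q y : S, q ∈ Sq ∧ y ∈ Sp ∧ x = q * y ∧ 2 ≤ deg q ∧ deg q ≤ deg y ∧
      deg x = deg q * deg y := by
  classical
  obtain ⟨f, hf, _⟩ := hmul_free x hx
  have hd2 : ∀ p : Sq, 2 ≤ deg (p : S) := fun p =>
    aux_deg_ge_two Sp Sq deg hadd_free hSqSp hone_mem hmul_free hfiber0 hfiber1 p p.2
  -- f has nonempty support
  have hfne : f ≠ 0 := by
    intro h0
    rw [h0] at hf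
    simp at hf
    rw [hf, hdeg_one] at hdx
    omega
  obtain ⟨q, hqs, hqmin⟩ := f.support.exists_min_image (fun p => deg (p : S))
    (Finsupp.support_nonempty_iff.mpr hfne)
  have hfq1 : 1 ≤ f q := Nat.one_le_iff_ne_zero.mpr (Finsupp.mem_support_iff.mp hqs)
  set g : Sq →₀ ℕ := f - Finsupp.single q 1 with hg
  have hfg : f = Finsupp.single q 1 + g := by
    ext p
    simp only [hg, Finsupp.add_apply, Finsupp.tsub_apply, Finsupp.single_apply]
    by_cases hpq : q = p
    · subst hpq; simp; omega
    · simp [hpq]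
  have hgle : ∀ p, g p ≤ f p := by
    intro p
    simp only [hg, Finsupp.tsub_apply]
    omega
  set y : S := g.prod fun q n => (q : S) ^ n with hy
  have hsingle : ((Finsupp.single q 1).prod fun (p : Sq) (n : ℕ) => (p : S) ^ n) = (q : S) := by
    rw [Finsupp.prod_single_index (h := fun (p : Sq) (n : ℕ) => (p : S) ^ n) (pow_zero _), pow_one]
  have hsplit : ((Finsupp.single q 1 + g).prod fun (p : Sq) (n : ℕ) => (p : S) ^ n) =
      ((Finsupp.single q 1).prod fun (p : Sq) (n : ℕ) => (p : S) ^ n) *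
        (g.prod fun (p : Sq) (n : ℕ) => (p : S) ^ n) :=
    Finsupp.prod_add_index' (fun p => pow_zero _) (fun p m k => pow_add _ m k)
  have hxqy : x = (q : S) * y := by
    rw [hf, hfg, hsplit, hsingle]
  have hymem : y ∈ Sp := aux_prod_mem Sp Sq hSqSp hone_mem hmul_mem g
  have hgne : g ≠ 0 := by
    intro h0
    rw [h0] at hfg
    apply hxq
    have : x = (q : S) := by rw [hf, hfg, add_zero, hsingle]
    rw [this]; exact q.2
  obtain ⟨p₀, hp₀⟩ := Finsupp.support_nonempty_iff.mpr hgne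
  have hdegy : deg y = g.prod fun q n => (deg (q : S)) ^ n :=
    aux_deg_prod Sq deg hdeg_one hdeg_mul g
  have hp₀f : p₀ ∈ f.support := by
    rw [Finsupp.mem_support_iff] at hp₀ ⊢
    have := hgle p₀
    omega
  have hqy : deg (q : S) ≤ deg y := by
    rw [hdegy]
    calc deg (q : S) ≤ deg (p₀ : S) := hqmin p₀ hp₀f
    _ ≤ (deg (p₀ : S)) ^ (g p₀) := by
        refine Nat.le_self_pow ?_ _
        exact Finsupp.mem_support_iff.mp hp₀
    _ ≤ g.prod fun q n => (deg (q : S)) ^ n := by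
        apply Finset.single_le_prod' _ hp₀
        intro p _
        exact Nat.one_le_iff_ne_zero.mpr (pow_ne_zero _ (by have := hd2 p; omega))
  exact ⟨q, y, q.2, hymem, hxqy, hd2 q, hqy, by rw [hxqy, hdeg_mul]⟩

end Aux2

section Aux3
variable {S : Type*} [CommSemiring S] (Sp Sq : Set S) (deg : S → ℕ)

lemma aux_fin (hfib : ∀ n : ℕ, {x : S | deg x = n}.Finite) (m : ℕ) (P : S → Prop) :
    Finite {x : S // deg x = m ∧ P x} := by
  haveI : Finite {x : S // x ∈ {x : S | deg x = m}} := (hfib m).to_subtype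
  exact Finite.of_injective
    (fun z : {x : S // deg x = m ∧ P x} => (⟨z.1, z.2.1⟩ : {x : S // x ∈ {x : S | deg x = m}}))
    (fun a b h => Subtype.ext (by simpa using congrArg Subtype.val h))

lemma aux_card_sigma {ι : Type} (s : Finset ι) (β : ι → Type*)
    (hfin : ∀ i, Finite (β i)) :
    Nat.card ((i : s) × β i) = ∑ i ∈ s, Nat.card (β i) := by
  classical
  haveI : ∀ i : s, Fintype (β i) := fun i => @Fintype.ofFinite _ (hfin i)
  rw [Nat.card_eq_fintype_card, Fintype.card_sigma,
    ← Finset.sum_coe_sort s fun i => Nat.card (β i)]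
  exact Finset.sum_congr rfl fun i _ => (Nat.card_eq_fintype_card).symm

lemma aux_mult_bound
    (hdeg_one : deg 1 = 1)
    (hdeg_mul : ∀ x y : S, deg (x * y) = deg x * deg y)
    (hfib : ∀ n : ℕ, {x : S | deg x = n}.Finite)
    (hadd_free : ∀ x : S, ∃! f : Sp →₀ ℕ, x = f.sum fun p n => n • (p : S))
    (hSqSp : Sq ⊆ Sp) (hone_mem : (1 : S) ∈ Sp)
    (hmul_mem : ∀ x ∈ Sp, ∀ y ∈ Sp, x * y ∈ Sp)
    (hmul_free : ∀ x ∈ Sp, ∃! f : Sq →₀ ℕ, x = f.prod fun q n => (q : S) ^ n)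
    (hfiber0 : ∀ x : S, deg x = 0 ↔ x = 0)
    (hfiber1 : ∀ x ∈ Sp, (deg x = 1 ↔ x = 1))
    (n : ℕ) (hn : 2 ≤ n) :
    cntIn deg Sp n ≤ cntIn deg Sq n +
      ∑ r ∈ n.divisors.filter (fun r => 2 ≤ r ∧ r * r ≤ n),
        cntIn deg Sq r * cntIn deg Sp (n / r) := by
  classical
  set F := n.divisors.filter (fun r => 2 ≤ r ∧ r * r ≤ n) with hFdef
  haveI h1 : Finite {x : S // deg x = n ∧ x ∈ Sq} := aux_fin deg hfib n _
  haveI h2 : Finite {x : S // deg x = n ∧ (x ∈ Sp ∧ x ∉ Sq)} := aux_fin deg hfib n _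
  haveI h3 : ∀ m : ℕ, Finite ({a : S // deg a = m ∧ a ∈ Sq} ×
      {b : S // deg b = n / m ∧ b ∈ Sp}) := fun m => by
    haveI := aux_fin deg hfib m (fun a => a ∈ Sq)
    haveI := aux_fin deg hfib (n / m) (fun b => b ∈ Sp)
    infer_instance
  have step1 : cntIn deg Sp n ≤ cntIn deg Sq n +
      Nat.card {x : S // deg x = n ∧ (x ∈ Sp ∧ x ∉ Sq)} := by
    rw [cntIn, cntIn, ← Nat.card_sum]
    apply Nat.card_le_card_of_injective
      (f := fun x : {x : S // deg x = n ∧ x ∈ Sp} =>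
        if hx : (x : S) ∈ Sq then
          (Sum.inl ⟨x, x.2.1, hx⟩ : {x : S // deg x = n ∧ x ∈ Sq} ⊕
            {x : S // deg x = n ∧ (x ∈ Sp ∧ x ∉ Sq)})
        else Sum.inr ⟨x, x.2.1, x.2.2, hx⟩)
    intro x₁ x₂ h
    dsimp only at h
    by_cases hx1 : (x₁ : S) ∈ Sq <;> by_cases hx2 : (x₂ : S) ∈ Sq
    · rw [dif_pos hx1, dif_pos hx2] at h
      injection h with h'
      exact Subtype.ext (by simpa using congrArg Subtype.val h')
    · rw [dif_pos hx1, dif_neg hx2] at h; exact absurd h (by simp)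
    · rw [dif_neg hx1, dif_pos hx2] at h; exact absurd h (by simp)
    · rw [dif_neg hx1, dif_neg hx2] at h
      injection h with h'
      exact Subtype.ext (by simpa using congrArg Subtype.val h')
  have step2 : Nat.card {x : S // deg x = n ∧ (x ∈ Sp ∧ x ∉ Sq)} ≤
      ∑ r ∈ F, cntIn deg Sq r * cntIn deg Sp (n / r) := by
    have hdec : ∀ x : {x : S // deg x = n ∧ (x ∈ Sp ∧ x ∉ Sq)},
        ∃ q y : S, q ∈ Sq ∧ y ∈ Sp ∧ (x : S) = q * y ∧ 2 ≤ deg q ∧ deg q ≤ deg y ∧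
          deg (x : S) = deg q * deg y := fun x =>
      aux_mdecomp Sp Sq deg hdeg_one hdeg_mul hadd_free hSqSp hone_mem hmul_mem hmul_free
        hfiber0 hfiber1 x x.2.2.1 (by rw [x.2.1]; exact hn) x.2.2.2
    choose q y hq hy hxy h2q hqy hdm using hdec
    have hdvd : ∀ x, deg (q x) ∣ n := fun x => by
      rw [← x.2.1, hdm x]; exact Dvd.intro _ rfl
    have hmemF : ∀ x, deg (q x) ∈ F := fun x => by
      rw [hFdef, Finset.mem_filter, Nat.mem_divisors]
      refine ⟨⟨hdvd x, by omega⟩, h2q x, ?_⟩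
      calc deg (q x) * deg (q x) ≤ deg (q x) * deg (y x) :=
            Nat.mul_le_mul_left _ (hqy x)
      _ = n := by rw [← hdm x, x.2.1]
    have hyd : ∀ x, deg (y x) = n / deg (q x) := fun x => by
      have hn' : n = deg (q x) * deg (y x) := by rw [← hdm x, x.2.1]
      rw [hn', Nat.mul_div_cancel_left _ (by have := h2q x; omega)]
    have key : Nat.card {x : S // deg x = n ∧ (x ∈ Sp ∧ x ∉ Sq)} ≤
        Nat.card ((r : F) × ({a : S // deg a = (r : ℕ) ∧ a ∈ Sq} ×
          {b : S // deg b = n / (r : ℕ) ∧ b ∈ Sp})) := by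
      apply Nat.card_le_card_of_injective
        (f := fun x => ⟨⟨deg (q x), hmemF x⟩, ⟨q x, rfl, hq x⟩, ⟨y x, (hyd x), hy x⟩⟩)
      intro x₁ x₂ h
      have hv := congrArg (fun z : (r : F) × ({a : S // deg a = (r : ℕ) ∧ a ∈ Sq} ×
          {b : S // deg b = n / (r : ℕ) ∧ b ∈ Sp}) => ((z.2.1 : S), (z.2.2 : S))) h
      simp only [Prod.mk.injEq] at hv
      apply Subtype.ext
      rw [hxy x₁, hxy x₂, hv.1, hv.2]
    calc Nat.card {x : S // deg x = n ∧ (x ∈ Sp ∧ x ∉ Sq)} ≤ _ := key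
    _ = ∑ r ∈ F, Nat.card ({a : S // deg a = r ∧ a ∈ Sq} ×
          {b : S // deg b = n / r ∧ b ∈ Sp}) := aux_card_sigma F _ h3
    _ = ∑ r ∈ F, cntIn deg Sq r * cntIn deg Sp (n / r) := by
        refine Finset.sum_congr rfl fun r _ => ?_
        rw [Nat.card_prod]; rfl
  omega

lemma aux_add_bound
    (hdeg_add : ∀ x y : S, deg (x + y) = deg x + deg y)
    (hfib : ∀ n : ℕ, {x : S | deg x = n}.Finite)
    (hadd_free : ∀ x : S, ∃! f : Sp →₀ ℕ, x = f.sum fun p n => n • (p : S))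
    (hSqSp : Sq ⊆ Sp)
    (s M : ℕ) (F : Finset ℕ)
    (hF : ∀ r ∈ F, r ≤ s ∧ s + r < M) :
    cntIn deg Sp M + (∑ r ∈ F, cntIn deg Sq r * cntIn deg Sp (M - r)) ≤ cntAll deg M := by
  classical
  haveI hfM : Finite {x : S // deg x = M} := by
    haveI : Finite {x : S // x ∈ {x : S | deg x = M}} := (hfib M).to_subtype
    exact Finite.of_injective
      (fun z : {x : S // deg x = M} => (⟨z.1, z.2⟩ : {x : S // x ∈ {x : S | deg x = M}}))
      (fun a b h => Subtype.ext (by simpa using congrArg Subtype.val h))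
  haveI h1 : Finite {x : S // deg x = M ∧ x ∈ Sp} := aux_fin deg hfib M _
  haveI h3 : ∀ m : ℕ, Finite ({a : S // deg a = m ∧ a ∈ Sq} ×
      {b : S // deg b = M - m ∧ b ∈ Sp}) := fun m => by
    haveI := aux_fin deg hfib m (fun a => a ∈ Sq)
    haveI := aux_fin deg hfib (M - m) (fun b => b ∈ Sp)
    infer_instance
  have key : Nat.card ({x : S // deg x = M ∧ x ∈ Sp} ⊕
      ((r : F) × ({a : S // deg a = (r : ℕ) ∧ a ∈ Sq} ×
        {b : S // deg b = M - (r : ℕ) ∧ b ∈ Sp}))) ≤ Nat.card {x : S // deg x = M} := by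
    apply Nat.card_le_card_of_injective (f := fun z => match z with
      | Sum.inl x => (⟨x, x.2.1⟩ : {x : S // deg x = M})
      | Sum.inr ⟨r, a, b⟩ => ⟨(a : S) + b, by
          rw [hdeg_add, a.2.1, b.2.1]
          have := hF r r.2
          omega⟩)
    rintro (x₁ | ⟨⟨r₁, hr₁⟩, ⟨a₁, ha₁, ha₁'⟩, ⟨b₁, hb₁, hb₁'⟩⟩)
      (x₂ | ⟨⟨r₂, hr₂⟩, ⟨a₂, ha₂, ha₂'⟩, ⟨b₂, hb₂, hb₂'⟩⟩) h <;>
      simp only [Subtype.mk.injEq] at h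
    · exact congrArg Sum.inl (Subtype.ext h)
    · exact absurd h.symm (aux_two_ne Sp hadd_free _ _ _ (hSqSp ha₂') hb₂' x₁.2.2)
    · exact absurd h (aux_two_ne Sp hadd_free _ _ _ (hSqSp ha₁') hb₁' x₂.2.2)
    · have hd1 := hF r₁ hr₁
      have hd2 := hF r₂ hr₂
      have e1 : deg a₁ = r₁ := ha₁
      have e2 : deg b₁ = M - r₁ := hb₁
      have e3 : deg a₂ = r₂ := ha₂
      have e4 : deg b₂ = M - r₂ := hb₂
      have hfour := aux_four Sp hadd_free a₁ b₁ a₂ b₂ (hSqSp ha₁') hb₁' (hSqSp ha₂') hb₂' h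
        (fun he => by rw [he] at e1; omega)
        (fun he => by rw [he] at e1; omega)
        (fun he => by rw [he] at e3; omega)
        (fun he => by rw [he] at e3; omega)
      obtain ⟨hea, heb⟩ := hfour
      have hr : r₁ = r₂ := by rw [hea] at e1; omega
      subst hr
      subst hea
      subst heb
      rfl
  rw [Nat.card_sum, aux_card_sigma _ _ h3] at key
  calc cntIn deg Sp M + ∑ r ∈ F, cntIn deg Sq r * cntIn deg Sp (M - r)
      = Nat.card {x : S // deg x = M ∧ x ∈ Sp} +
        ∑ r ∈ F, Nat.card ({a : S // deg a = r ∧ a ∈ Sq} ×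
          {b : S // deg b = M - r ∧ b ∈ Sp}) := by
        rw [cntIn]
        congr 1
        refine Finset.sum_congr rfl fun r _ => ?_
        rw [Nat.card_prod]; rfl
  _ ≤ Nat.card {x : S // deg x = M} := key
  _ = cntAll deg M := rfl

end Aux3

lemma aux_div_ineq (D r n : ℕ) (hD : 0 < D) (hDr : D ≤ r) (hdvd : r ∣ n)
    (hrr : r * r ≤ n) : n / r + r ≤ n / D + D := by
  obtain ⟨a, ha⟩ := hdvd
  have hr0 : 0 < r := by omega
  have hnr : n / r = a := by rw [ha, Nat.mul_div_cancel_left _ hr0]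
  have hra : r ≤ a := Nat.le_of_mul_le_mul_left (by rw [← ha]; exact hrr) hr0
  obtain ⟨c, hc⟩ : ∃ c, r = D + c := ⟨r - D, by omega⟩
  obtain ⟨b, hb⟩ : ∃ b, a = D + b := ⟨a - D, by omega⟩
  have hkey : D * a + D * r ≤ r * a + D * D := by
    subst hc hb; nlinarith [Nat.zero_le (c * b)]
  have h7 : D * (a + r) ≤ r * a + D * D := by rw [Nat.mul_add]; exact hkey
  obtain ⟨d, hd⟩ : ∃ d, a + r = D + d := ⟨a + r - D, by omega⟩
  have h8 : D * d ≤ r * a := by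
    rw [hd, Nat.mul_add] at h7
    linarith
  have h9 : d ≤ n / D := (Nat.le_div_iff_mul_le hD).mpr (by rw [ha]; linarith)
  omega

lemma aux_mono_chain (cnt : ℕ → ℕ) (N : ℕ) (hm : ∀ n ≥ N, cnt n ≤ cnt (n + 1)) :
    ∀ a b : ℕ, N ≤ a → a ≤ b → cnt a ≤ cnt b := by
  intro a b hNa hab
  induction b, hab using Nat.le_induction with
  | base => exact le_refl _
  | succ b hab ih => exact ih.trans (hm b (hNa.trans hab))

/-- In an arithmetical semiring `(S, +, □, ∂)` (additive monoid free on the additive primes `Sp`,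
multiplicative monoid of additive primes free on the multiplicative primes `Sq`, degree a
semiring homomorphism to `ℕ` with finite fibers, `∂⁻¹(0) = {0}` and `∂⁻¹(1) ∩ Sp = {1}`),
assumed monotonic
(`S⁺(n) ≤ S⁺(n+1)` for all large `n`), and `D > 2` an integer: for all sufficiently large `n`,
`S⁺(n) − S□(n) − Σ_{r ∣ n, 2 ≤ r ≤ D−1} S□(r)·S⁺(n/r) ≤ S(⌊n/D⌋ + D) − S⁺(⌊n/D⌋ + D)`.
(Stated additively to avoid truncated subtraction.) -/
theorem stmt_7 {S : Type*} [CommSemiring S]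
    (Sp Sq : Set S) (deg : S → ℕ)
    (hdeg_zero : deg 0 = 0) (hdeg_one : deg 1 = 1)
    (hdeg_add : ∀ x y : S, deg (x + y) = deg x + deg y)
    (hdeg_mul : ∀ x y : S, deg (x * y) = deg x * deg y)
    (hfiber0 : ∀ x : S, deg x = 0 ↔ x = 0)
    (hfib : ∀ n : ℕ, {x : S | deg x = n}.Finite)
    (hadd_free : ∀ x : S, ∃! f : Sp →₀ ℕ, x = f.sum fun p n => n • (p : S))
    (hSqSp : Sq ⊆ Sp)
    (hone_mem : (1 : S) ∈ Sp)
    (hmul_mem : ∀ x ∈ Sp, ∀ y ∈ Sp, x * y ∈ Sp)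
    (hmul_free : ∀ x ∈ Sp, ∃! f : Sq →₀ ℕ, x = f.prod fun q n => (q : S) ^ n)
    (hfiber1 : ∀ x ∈ Sp, (deg x = 1 ↔ x = 1))
    (hmono : ∃ N : ℕ, ∀ n ≥ N, cntIn deg Sp n ≤ cntIn deg Sp (n + 1))
    (D : ℕ) (hD : 2 < D) :
    ∃ N : ℕ, ∀ n ≥ N,
      cntIn deg Sp n + cntIn deg Sp (n / D + D) ≤
        cntIn deg Sq n +
          (∑ r ∈ n.divisors.filter fun r => 2 ≤ r ∧ r ≤ D - 1,
            cntIn deg Sq r * cntIn deg Sp (n / r)) +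
          cntAll deg (n / D + D) := by
  classical
  obtain ⟨N₀, hm⟩ := hmono
  refine ⟨9 * D * D + N₀ * N₀ + D * D + 2, fun n hn => ?_⟩
  have hDD : 0 < D := by omega
  have hn2 : 2 ≤ n := le_trans (Nat.le_add_left 2 _) hn
  have h9 : 9 * (D * D) ≤ n := by
    have : 9 * D * D ≤ n := le_trans (by omega) hn
    linarith [this]
  have hN0 : N₀ * N₀ ≤ n := le_trans (by linarith [Nat.zero_le (9 * D * D), Nat.zero_le (D * D)]) hn
  have hDDn : D * D ≤ n := le_trans (by linarith [Nat.zero_le (9 * D * D), Nat.zero_le (N₀ * N₀)]) hn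
  set s := Nat.sqrt n with hs
  have hss : s * s ≤ n := Nat.le_sqrt.mp (le_refl s)
  have hs3D : 3 * D ≤ s := Nat.le_sqrt.mpr (by linarith [h9])
  have hsN0 : N₀ ≤ s := Nat.le_sqrt.mpr hN0
  have hs0 : 0 < s := by omega
  -- generalize n / D
  obtain ⟨t, ht⟩ : ∃ t, t = n / D := ⟨_, rfl⟩
  have h3s : 3 * s ≤ t := by
    rw [ht]
    refine (Nat.le_div_iff_mul_le hDD).mpr ?_
    calc 3 * s * D = 3 * D * s := by ring
    _ ≤ s * s := Nat.mul_le_mul_right s hs3D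
    _ ≤ n := hss
  have h2s : 2 * s < t + D := by omega
  rw [show n / D + D = t + D from by rw [← ht]]
  set F_small := n.divisors.filter (fun r => 2 ≤ r ∧ r ≤ D - 1) with hFsmall
  set F_mid := n.divisors.filter (fun r => 2 ≤ r ∧ r * r ≤ n) with hFmid
  set F_big := n.divisors.filter (fun r => D ≤ r ∧ r * r ≤ n) with hFbig
  have hL1 := aux_mult_bound Sp Sq deg hdeg_one hdeg_mul hfib hadd_free hSqSp hone_mem
    hmul_mem hmul_free hfiber0 hfiber1 n hn2
  rw [← hFmid] at hL1
  have hsub : F_mid ⊆ F_small ∪ F_big := by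
    intro r hr
    rw [hFmid, Finset.mem_filter] at hr
    rw [Finset.mem_union, hFsmall, hFbig, Finset.mem_filter, Finset.mem_filter]
    rcases Nat.lt_or_ge r D with h | h
    · left; exact ⟨hr.1, hr.2.1, by omega⟩
    · right; exact ⟨hr.1, h, hr.2.2⟩
  have hdisj : Disjoint F_small F_big := by
    rw [Finset.disjoint_left]
    intro r hr hr'
    rw [hFsmall, Finset.mem_filter] at hr
    rw [hFbig, Finset.mem_filter] at hr'
    omega
  have hsplit : (∑ r ∈ F_mid, cntIn deg Sq r * cntIn deg Sp (n / r)) ≤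
      (∑ r ∈ F_small, cntIn deg Sq r * cntIn deg Sp (n / r)) +
      (∑ r ∈ F_big, cntIn deg Sq r * cntIn deg Sp (n / r)) := by
    rw [← Finset.sum_union hdisj]
    exact Finset.sum_le_sum_of_subset hsub
  have hbigmem : ∀ r ∈ F_big, r ∣ n ∧ D ≤ r ∧ r * r ≤ n := by
    intro r hr
    rw [hFbig, Finset.mem_filter, Nat.mem_divisors] at hr
    exact ⟨hr.1.1, hr.2⟩
  have hbig : (∑ r ∈ F_big, cntIn deg Sq r * cntIn deg Sp (n / r)) ≤
      (∑ r ∈ F_big, cntIn deg Sq r * cntIn deg Sp ((t + D) - r)) := by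
    refine Finset.sum_le_sum fun r hr => ?_
    obtain ⟨hdvd, hDr, hrr⟩ := hbigmem r hr
    have hr0 : 0 < r := by omega
    have hrs : r ≤ s := Nat.le_sqrt.mpr hrr
    have hsnr : s ≤ n / r := by
      calc s ≤ n / s := (Nat.le_div_iff_mul_le hs0).mpr hss
      _ ≤ n / r := Nat.div_le_div_left hrs hr0
    have hchain : n / r ≤ (t + D) - r := by
      have := aux_div_ineq D r n hDD hDr hdvd hrr
      omega
    exact Nat.mul_le_mul_left _
      (aux_mono_chain (cntIn deg Sp) N₀ hm (n / r) ((t + D) - r) (by omega) hchain)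
  have hL2 : cntIn deg Sp (t + D) +
      (∑ r ∈ F_big, cntIn deg Sq r * cntIn deg Sp ((t + D) - r)) ≤ cntAll deg (t + D) := by
    refine aux_add_bound Sp Sq deg hdeg_add hfib hadd_free hSqSp s (t + D) F_big ?_
    intro r hr
    obtain ⟨hdvd, hDr, hrr⟩ := hbigmem r hr
    have hrs : r ≤ s := Nat.le_sqrt.mpr hrr
    exact ⟨hrs, by omega⟩
  omega
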